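/- If η, a₁, a₂, τ₁, τ₂ > 0 satisfy ηa₁τ₁ + ηa₂τ₂ < 1, then every root λ of the characteristic equation λ + ηa₁e^{-λτ₁} + ηa₂e^{-λτ₂} = 0 satisfies Re(λ) < 0. -/
import Mathlib


open Complex

/-- If ηa₁τ₁ + ηa₂τ₂ < 1, then every root of λ + ηa₁e^{-λτ₁} + ηa₂e^{-λτ₂} = 0
has negative real part. -/
theorem roots_in_left_half_plane (η a₁ a₂ τ₁ τ₂ : ℝ) (hη : 0 < η)
    (ha₁ : 0 < a₁) (ha₂ : 0 < a₂) (hτ₁ : 0 < τ₁) (hτ₂ : 0 < τ₂)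
    (hcond : η * a₁ * τ₁ + η * a₂ * τ₂ < 1) :
    ∀ l : ℂ, l + (η * a₁ : ℂ) * Complex.exp (-l * τ₁) +
      (η * a₂ : ℂ) * Complex.exp (-l * τ₂) = 0 → l.re < 0 := by
  intro l hl
  by_contra h
  push_neg at h
  set x := l.re with hx
  set y := l.im with hy
  have hre := congrArg Complex.re hl
  have him := congrArg Complex.im hl
  simp [Complex.exp_re, Complex.exp_im, Complex.add_re, Complex.add_im,
    Complex.mul_re, Complex.mul_im, ← hx, ← hy] at hre him
  have hE₁ : Real.exp (-(x * τ₁)) ≤ 1 := Real.exp_le_one_iff.mpr (by nlinarith)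
  have hE₂ : Real.exp (-(x * τ₂)) ≤ 1 := Real.exp_le_one_iff.mpr (by nlinarith)
  have hE₁p : 0 < Real.exp (-(x * τ₁)) := Real.exp_pos _
  have hE₂p : 0 < Real.exp (-(x * τ₂)) := Real.exp_pos _
  have hy0 : y = 0 := by
    by_contra hy0
    have heq : y = η * a₁ * (Real.exp (-(x * τ₁)) * Real.sin (y * τ₁))
        + η * a₂ * (Real.exp (-(x * τ₂)) * Real.sin (y * τ₂)) := by linarith
    have hs₁ : |Real.sin (y * τ₁)| ≤ |y| * τ₁ := by
      have := Real.abs_sin_le_abs (x := y * τ₁)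
      rwa [abs_mul, abs_of_pos hτ₁] at this
    have hs₂ : |Real.sin (y * τ₂)| ≤ |y| * τ₂ := by
      have := Real.abs_sin_le_abs (x := y * τ₂)
      rwa [abs_mul, abs_of_pos hτ₂] at this
    have hb : |y| ≤ (η * a₁ * τ₁ + η * a₂ * τ₂) * |y| := by
      calc |y| = |η * a₁ * (Real.exp (-(x * τ₁)) * Real.sin (y * τ₁))
          + η * a₂ * (Real.exp (-(x * τ₂)) * Real.sin (y * τ₂))| := by rw [← heq]
        _ ≤ |η * a₁ * (Real.exp (-(x * τ₁)) * Real.sin (y * τ₁))|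
          + |η * a₂ * (Real.exp (-(x * τ₂)) * Real.sin (y * τ₂))| := abs_add_le _ _
        _ ≤ (η * a₁ * τ₁ + η * a₂ * τ₂) * |y| := by
            simp only [abs_mul, abs_of_pos hη, abs_of_pos ha₁, abs_of_pos ha₂,
              abs_of_pos hE₁p, abs_of_pos hE₂p]
            have k₁ : Real.exp (-(x*τ₁)) * |Real.sin (y*τ₁)| ≤ |y| * τ₁ := by
              nlinarith [abs_nonneg (Real.sin (y*τ₁))]
            have k₂ : Real.exp (-(x*τ₂)) * |Real.sin (y*τ₂)| ≤ |y| * τ₂ := by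
              nlinarith [abs_nonneg (Real.sin (y*τ₂))]
            have m₁ := mul_le_mul_of_nonneg_left k₁ (mul_pos hη ha₁).le
            have m₂ := mul_le_mul_of_nonneg_left k₂ (mul_pos hη ha₂).le
            nlinarith [m₁, m₂]
    have : 0 < |y| := abs_pos.mpr hy0
    nlinarith
  rw [hy0] at hre
  simp only [zero_mul, Real.cos_zero, mul_one] at hre
  nlinarith [mul_pos (mul_pos hη ha₁) hE₁p, mul_pos (mul_pos hη ha₂) hE₂p]
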